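/- Every V in the cone 𝒞 = {V ∈ ℍ₊^{n+m} : [A B] V [A B]* = [I 0] V [I 0]*} can be written as a sum V = ∑_{i=1}^{n+m} V_i where each V_i ∈ 𝒞 and rank(V_i) ≤ 1. -/

import Mathlib

open Matrix
open scoped ComplexOrder

section Aux

open LinearMap

variable {N K : Type*} [Fintype N] [DecidableEq N] [Fintype K] [DecidableEq K]

-- Step 1: existence of the unitary U with U ∘ Yᴴ = Xᴴ
lemma exists_unitary_comp (X Y : Matrix N K ℂ) (hXY : X * Xᴴ = Y * Yᴴ) :
    ∃ U : EuclideanSpace ℂ K ≃ₗᵢ[ℂ] EuclideanSpace ℂ K,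
      ∀ v : EuclideanSpace ℂ N, U (toEuclideanLin Yᴴ v) = toEuclideanLin Xᴴ v := by
  classical
  set S : EuclideanSpace ℂ N →ₗ[ℂ] EuclideanSpace ℂ K := toEuclideanLin Xᴴ with hS
  set T : EuclideanSpace ℂ N →ₗ[ℂ] EuclideanSpace ℂ K := toEuclideanLin Yᴴ with hT
  have hinner : ∀ u v : EuclideanSpace ℂ N,
      (inner ℂ (S u) (S v) : ℂ) = inner ℂ (T u) (T v) := by
    intro u v
    have hSad : adjoint S = toEuclideanLin X := by
      rw [hS, ← Matrix.toEuclideanLin_conjTranspose_eq_adjoint, conjTranspose_conjTranspose]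
    have hTad : adjoint T = toEuclideanLin Y := by
      rw [hT, ← Matrix.toEuclideanLin_conjTranspose_eq_adjoint, conjTranspose_conjTranspose]
    calc (inner ℂ (S u) (S v) : ℂ) = inner ℂ u (adjoint S (S v)) := by
          rw [LinearMap.adjoint_inner_right]
      _ = inner ℂ u (adjoint T (T v)) := by
          rw [hSad, hTad, hS, hT]
          congr 1
          have : (toEuclideanLin X) (toEuclideanLin Xᴴ v) = toEuclideanLin (X * Xᴴ) v := by
            simp [Matrix.toEuclideanLin_apply, Matrix.mulVec_mulVec]
          rw [this]
          have : (toEuclideanLin Y) (toEuclideanLin Yᴴ v) = toEuclideanLin (Y * Yᴴ) v := by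
            simp [Matrix.toEuclideanLin_apply, Matrix.mulVec_mulVec]
          rw [this, hXY]
      _ = inner ℂ (T u) (T v) := by rw [LinearMap.adjoint_inner_right]
  have hker : ker T ≤ ker S := by
    intro u hu
    rw [mem_ker] at hu ⊢
    have := hinner u u
    rw [hu] at this
    simp only [inner_zero_right] at this
    exact inner_self_eq_zero.mp this
  -- the isometry on range T
  let L0 : range T →ₗ[ℂ] EuclideanSpace ℂ K :=
    (Submodule.liftQ (ker T) S hker) ∘ₗ (T.quotKerEquivRange.symm : range T →ₗ[ℂ] _)
  have hL0 : ∀ u : EuclideanSpace ℂ N, L0 ⟨T u, mem_range_self T u⟩ = S u := by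
    intro u
    have h1 : T.quotKerEquivRange.symm ⟨T u, mem_range_self T u⟩
        = Submodule.Quotient.mk u := by
      rw [LinearEquiv.symm_apply_eq]
      exact Subtype.ext (LinearMap.quotKerEquivRange_apply_mk T u).symm
    simp only [L0, LinearMap.comp_apply, LinearEquiv.coe_coe, h1, Submodule.liftQ_apply]
  have hnorm : ∀ x : range T, ‖L0 x‖ = ‖(x : EuclideanSpace ℂ K)‖ := by
    rintro ⟨x, u, rfl⟩
    rw [hL0 u]
    show ‖S u‖ = ‖T u‖
    simp only [@norm_eq_sqrt_re_inner ℂ]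
    rw [hinner u u]
  let L : (range T) →ₗᵢ[ℂ] EuclideanSpace ℂ K := ⟨L0, hnorm⟩
  let Ui : EuclideanSpace ℂ K →ₗᵢ[ℂ] EuclideanSpace ℂ K := L.extend
  have hUi : ∀ u : EuclideanSpace ℂ N, Ui (T u) = S u := by
    intro u
    have := L.extend_apply ⟨T u, mem_range_self T u⟩
    rw [this]
    exact hL0 u
  have hsurj : Function.Surjective Ui := by
    have hinj : Function.Injective Ui := Ui.injective
    exact (LinearMap.injective_iff_surjective (f := Ui.toLinearMap)).mp hinj
  exact ⟨LinearIsometryEquiv.ofSurjective Ui hsurj, fun u => by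
    rw [← hUi u]; rfl⟩

lemma unitary_eigenbasis {E : Type*} [NormedAddCommGroup E] [InnerProductSpace ℂ E]
    [FiniteDimensional ℂ E] {k : ℕ} (hk : Module.finrank ℂ E = k) (U : E ≃ₗᵢ[ℂ] E) :
    ∃ (w : OrthonormalBasis (Fin k) ℂ E) (lam : Fin k → ℂ),
      (∀ i, star (lam i) * lam i = 1) ∧ ∀ i, U (w i) = lam i • w i := by
  classical
  set u : E →ₗ[ℂ] E := (U.toLinearEquiv : E →ₗ[ℂ] E) with hu
  have hadj : adjoint u = (U.symm.toLinearEquiv : E →ₗ[ℂ] E) := by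
    symm
    rw [LinearMap.eq_adjoint_iff]
    intro x y
    calc (inner ℂ (U.symm x) y : ℂ) = inner ℂ (U (U.symm x)) (U y) := (U.inner_map_map _ _).symm
      _ = inner ℂ x (u y) := by rw [U.apply_symm_apply]; rfl
  have hu1 : u * adjoint u = 1 := by
    rw [hadj]; ext x
    exact U.apply_symm_apply x
  have hu2 : adjoint u * u = 1 := by
    rw [hadj]; ext x
    exact U.symm_apply_apply x
  set A : E →ₗ[ℂ] E := (1/2 : ℂ) • (u + adjoint u) with hA
  set B : E →ₗ[ℂ] E := (Complex.I/2 : ℂ) • (adjoint u - u) with hB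
  have hAsymm : A.IsSymmetric := by
    intro x y
    simp only [hA, LinearMap.smul_apply, LinearMap.add_apply, inner_smul_left, inner_smul_right,
      inner_add_left, inner_add_right, LinearMap.adjoint_inner_left, LinearMap.adjoint_inner_right]
    rw [show (starRingEnd ℂ) (1/2) = 1/2 by simp [Complex.ext_iff], add_comm]
  have hBsymm : B.IsSymmetric := by
    intro x y
    simp only [hB, LinearMap.smul_apply, LinearMap.sub_apply, inner_smul_left, inner_smul_right,
      inner_sub_left, inner_sub_right, LinearMap.adjoint_inner_left, LinearMap.adjoint_inner_right]
    rw [show (starRingEnd ℂ) (Complex.I/2) = -(Complex.I/2) by rw [map_div₀, Complex.conj_I, map_ofNat]; ring]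
    ring
  have hkey : (u + adjoint u) * (adjoint u - u) = (adjoint u - u) * (u + adjoint u) := by
    rw [add_mul, mul_sub, mul_sub, sub_mul, mul_add, mul_add, hu1, hu2]
    abel
  have hcomm : Commute A B := by
    unfold Commute SemiconjBy
    rw [hA, hB]
    simp only [Algebra.smul_mul_assoc, Algebra.mul_smul_comm]
    rw [smul_comm ((1:ℂ)/2) (Complex.I/2), hkey]
  have hInt0 := LinearMap.IsSymmetric.directSum_isInternal_of_commute hAsymm hBsymm hcomm
  have hFam0 := LinearMap.IsSymmetric.orthogonalFamily_eigenspace_inf_eigenspace hAsymm hBsymm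
  set V : ℂ × ℂ → Submodule ℂ E :=
    (fun i : ℂ × ℂ ↦ Module.End.eigenspace A i.2 ⊓ Module.End.eigenspace B i.1) with hVdef
  have hfin : {μ : ℂ × ℂ | V μ ≠ ⊥}.Finite :=
    Submodule.finite_ne_bot_of_iSupIndep hInt0.submodule_iSupIndep
  haveI : Fintype {μ : ℂ × ℂ // V μ ≠ ⊥} := hfin.fintype
  have hInt : DirectSum.IsInternal (fun μ : {μ : ℂ × ℂ // V μ ≠ ⊥} => V μ.1) :=
    (DirectSum.isInternal_ne_bot_iff).mpr hInt0
  have hFam : OrthogonalFamily ℂ (fun μ : {μ : ℂ × ℂ // V μ ≠ ⊥} => (V μ.1 : Submodule ℂ E))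
      (fun μ => (V μ.1).subtypeₗᵢ) := hFam0.comp Subtype.val_injective
  let w := hInt.subordinateOrthonormalBasis hk hFam
  let idx : Fin k → ℂ × ℂ := fun a => (hInt.subordinateOrthonormalBasisIndex hk a hFam).1
  have hsub : ∀ a, w a ∈ Module.End.eigenspace A (idx a).2 ⊓ Module.End.eigenspace B (idx a).1 :=
    fun a => hInt.subordinateOrthonormalBasis_subordinate hk a hFam
  set lam : Fin k → ℂ := fun a => (idx a).2 + Complex.I * (idx a).1 with hlamdef
  have huAB : u = A + Complex.I • B := by
    have h2 : Complex.I * (Complex.I/2) = -(1/2) := by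
      rw [mul_div_assoc', Complex.I_mul_I]; ring
    rw [hA, hB, smul_smul, h2]
    module
  have hUw : ∀ a, U (w a) = lam a • w a := by
    intro a
    have hAw : A (w a) = (idx a).2 • w a := Module.End.mem_eigenspace_iff.mp (hsub a).1
    have hBw : B (w a) = (idx a).1 • w a := Module.End.mem_eigenspace_iff.mp (hsub a).2
    have : U (w a) = u (w a) := rfl
    rw [this, huAB]
    simp only [LinearMap.add_apply, LinearMap.smul_apply, hAw, hBw, smul_smul]
    rw [← add_smul]
  refine ⟨w, lam, fun a => ?_, hUw⟩
  have hn1 : ‖w a‖ = 1 := w.orthonormal.1 a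
  have hn2 : ‖lam a • w a‖ = 1 := by rw [← hUw a, U.norm_map, hn1]
  rw [norm_smul, hn1, mul_one] at hn2
  have : Complex.normSq (lam a) = 1 := by
    rw [Complex.normSq_eq_norm_sq]
    simp only [hn2, one_pow]
  rw [Complex.star_def, mul_comm, Complex.mul_conj, this]
  norm_num

lemma heart {N K : Type*} [Fintype N] [DecidableEq N] [Fintype K] [DecidableEq K]
    {k : ℕ} (hk : Fintype.card K = k) (X Y : Matrix N K ℂ) (hXY : X * Xᴴ = Y * Yᴴ) :
    ∃ (w : OrthonormalBasis (Fin k) ℂ (EuclideanSpace ℂ K)) (lam : Fin k → ℂ),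
      (∀ i, star (lam i) * lam i = 1) ∧
      ∀ i, Y *ᵥ (w i) = lam i • (X *ᵥ (w i)) := by
  obtain ⟨U, hU⟩ := exists_unitary_comp X Y hXY
  have hk' : Module.finrank ℂ (EuclideanSpace ℂ K) = k := by
    rw [finrank_euclideanSpace, hk]
  obtain ⟨w, lam, hlam, hUw⟩ := unitary_eigenbasis hk' U
  refine ⟨w, lam, hlam, fun i => ?_⟩
  have hsymm : U.symm (w i) = star (lam i) • w i := by
    have h0 := congrArg U.symm (hUw i)
    rw [U.symm_apply_apply, _root_.map_smul] at h0
    calc U.symm (w i) = (star (lam i) * lam i) • U.symm (w i) := by rw [hlam i, one_smul]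
      _ = star (lam i) • (lam i • U.symm (w i)) := by rw [mul_smul]
      _ = star (lam i) • w i := by rw [← h0]
  have key : toEuclideanLin X (w i) = star (lam i) • toEuclideanLin Y (w i) := by
    apply ext_inner_left ℂ
    intro v
    calc (inner ℂ v (toEuclideanLin X (w i)) : ℂ)
        = inner ℂ (toEuclideanLin Xᴴ v) (w i) := by
          rw [Matrix.toEuclideanLin_conjTranspose_eq_adjoint, adjoint_inner_left]
      _ = inner ℂ (U (toEuclideanLin Yᴴ v)) (w i) := by rw [hU v]
      _ = inner ℂ (U (toEuclideanLin Yᴴ v)) (U (U.symm (w i))) := by rw [U.apply_symm_apply]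
      _ = inner ℂ (toEuclideanLin Yᴴ v) (U.symm (w i)) := U.inner_map_map _ _
      _ = star (lam i) * inner ℂ (toEuclideanLin Yᴴ v) (w i) := by
          rw [hsymm, inner_smul_right]
      _ = star (lam i) * inner ℂ v (toEuclideanLin Y (w i)) := by
          rw [Matrix.toEuclideanLin_conjTranspose_eq_adjoint, adjoint_inner_left]
      _ = inner ℂ v (star (lam i) • toEuclideanLin Y (w i)) := by rw [inner_smul_right]
  have h2 : toEuclideanLin Y (w i) = lam i • toEuclideanLin X (w i) := by
    rw [key, smul_smul, mul_comm, hlam i, one_smul]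
  funext j
  have h5 := congrArg (fun z : EuclideanSpace ℂ N => z j) h2
  simpa using h5

-- helper : PSD of outer product
lemma vecMulVec_star_posSemidef {K : Type*} [Fintype K] [DecidableEq K] (v : K → ℂ) :
    (vecMulVec v (star v)).PosSemidef := by
  rw [posSemidef_iff_dotProduct_mulVec]
  constructor
  · ext a b
    simp [vecMulVec_apply, conjTranspose_apply, Pi.star_apply, mul_comm]
  · intro x
    have : (star x) ⬝ᵥ (vecMulVec v (star v) *ᵥ x) = star (star v ⬝ᵥ x) * (star v ⬝ᵥ x) := by
      simp only [dotProduct, mulVec, vecMulVec_apply, Pi.star_apply, star_sum, star_mul',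
        star_star, Finset.mul_sum, Finset.sum_mul]
      rw [Finset.sum_comm]
      congr 1; ext a; congr 1; ext b; ring
    rw [this]
    exact star_mul_self_nonneg _

-- helper : conjugation of outer product
lemma mul_vecMulVec_star {N K : Type*} [Fintype N] [Fintype K] (M : Matrix N K ℂ) (v : K → ℂ) :
    M * vecMulVec v (star v) * Mᴴ = vecMulVec (M *ᵥ v) (star (M *ᵥ v)) := by
  ext a b
  simp only [Matrix.mul_apply, vecMulVec_apply, conjTranspose_apply, Pi.star_apply, mulVec,
    dotProduct, star_sum, star_mul', Finset.mul_sum, Finset.sum_mul]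
  congr 1; ext c; congr 1; ext d; ring

-- helper : rank of outer product
lemma rank_vecMulVec_le {N : Type*} [Fintype N] [DecidableEq N] (v w : N → ℂ) :
    (vecMulVec v w).rank ≤ 1 := by
  exact Matrix.rank_vecMulVec_le v w



end Aux

/-- The cone `𝒞 = {V ⪰ 0 : [A B] V [A B]ᴴ = [I 0] V [I 0]ᴴ}`. -/
def coneC {n m : ℕ} (A : Matrix (Fin n) (Fin n) ℂ) (B : Matrix (Fin n) (Fin m) ℂ) :
    Set (Matrix (Fin n ⊕ Fin m) (Fin n ⊕ Fin m) ℂ) :=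
  {V | V.PosSemidef ∧
    (fromCols A B) * V * (fromCols A B)ᴴ =
      (fromCols (1 : Matrix (Fin n) (Fin n) ℂ) (0 : Matrix (Fin n) (Fin m) ℂ)) * V *
        (fromCols (1 : Matrix (Fin n) (Fin n) ℂ) (0 : Matrix (Fin n) (Fin m) ℂ))ᴴ}

/-- Every element of the cone `𝒞` is a sum of `n + m` rank-at-most-one
elements of `𝒞`. -/
theorem cone_rank_one_decomposition {n m : ℕ}
    (A : Matrix (Fin n) (Fin n) ℂ) (B : Matrix (Fin n) (Fin m) ℂ)
    (V : Matrix (Fin n ⊕ Fin m) (Fin n ⊕ Fin m) ℂ) (hV : V ∈ coneC A B) :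
    ∃ f : Fin (n + m) → Matrix (Fin n ⊕ Fin m) (Fin n ⊕ Fin m) ℂ,
      V = ∑ i, f i ∧ ∀ i, f i ∈ coneC A B ∧ (f i).rank ≤ 1 := by
  classical
  obtain ⟨hpsd, hcone⟩ := hV
  have hk : Fintype.card (Fin n ⊕ Fin m) = n + m := by simp
  obtain ⟨F0, hF0⟩ : ∃ F0 : Matrix (Fin n ⊕ Fin m) (Fin n ⊕ Fin m) ℂ, V = F0ᴴ * F0 := by
    open MatrixOrder in exact CStarAlgebra.nonneg_iff_eq_star_mul_self.mp hpsd.nonneg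
  set F : Matrix (Fin n ⊕ Fin m) (Fin n ⊕ Fin m) ℂ := F0ᴴ with hFdef
  have hVF : V = F * Fᴴ := by rw [hF0, hFdef, conjTranspose_conjTranspose]
  set C : Matrix (Fin n) (Fin n ⊕ Fin m) ℂ := fromCols A B with hCdef
  set D : Matrix (Fin n) (Fin n ⊕ Fin m) ℂ :=
    fromCols (1 : Matrix (Fin n) (Fin n) ℂ) (0 : Matrix (Fin n) (Fin m) ℂ) with hDdef
  have hXY : (C * F) * (C * F)ᴴ = (D * F) * (D * F)ᴴ := by
    have h2 := hcone
    rw [hVF] at h2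
    simp only [conjTranspose_mul, Matrix.mul_assoc] at h2 ⊢
    exact h2
  obtain ⟨w, lam, hlam, hrel⟩ := heart hk (C * F) (D * F) hXY
  set g : Fin (n + m) → (Fin n ⊕ Fin m → ℂ) := fun i => F *ᵥ (w i) with hgdef
  refine ⟨fun i => vecMulVec (g i) (star (g i)), ?_, fun i => ?_⟩
  · -- sum identity
    have hW : ∀ c d, (∑ i, w i c * star (w i d)) = if c = d then 1 else 0 := by
      intro c d
      set Wm : Matrix (Fin n ⊕ Fin m) (Fin (n + m)) ℂ := Matrix.of fun c i => w i c with hWm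
      have h1 : Wmᴴ * Wm = 1 := by
        ext i j
        have horth := orthonormal_iff_ite.mp w.orthonormal i j
        rw [PiLp.inner_apply] at horth
        simp only [Matrix.mul_apply, conjTranspose_apply, hWm, Matrix.of_apply,
          Matrix.one_apply]
        simpa [mul_comm] using horth
      have h2 : Wm * Wmᴴ = 1 :=
        (Matrix.mul_eq_one_comm_of_equiv (Fintype.equivFinOfCardEq hk)).mpr h1
      have h3 := congrFun (congrFun h2 c) d
      simpa [Matrix.mul_apply, hWm, Matrix.one_apply] using h3
    rw [hVF]
    ext a b
    rw [Matrix.sum_apply]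
    have expand : ∀ i, vecMulVec (g i) (star (g i)) a b
        = ∑ c, ∑ d, (F a c * star (F b d)) * (w i c * star (w i d)) := by
      intro i
      have hga : g i a = ∑ c, F a c * w i c := rfl
      have hgb : g i b = ∑ d, F b d * w i d := rfl
      rw [vecMulVec_apply, Pi.star_apply, hga, hgb, star_sum, Finset.sum_mul_sum]
      congr 1; ext c; congr 1; ext d
      rw [star_mul']
      ring
    calc (F * Fᴴ) a b = ∑ c, ∑ d, (F a c * star (F b d)) * (if c = d then 1 else 0) := by
          simp [Matrix.mul_apply, conjTranspose_apply, mul_ite, Finset.sum_ite_eq, mul_one,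
            mul_zero]
      _ = ∑ c, ∑ d, (F a c * star (F b d)) * ∑ i, w i c * star (w i d) := by
          simp_rw [hW]
      _ = ∑ c, ∑ d, ∑ i, (F a c * star (F b d)) * (w i c * star (w i d)) := by
          simp_rw [Finset.mul_sum]
      _ = ∑ c, ∑ i, ∑ d, (F a c * star (F b d)) * (w i c * star (w i d)) :=
          Finset.sum_congr rfl (fun c _ => Finset.sum_comm)
      _ = ∑ i, ∑ c, ∑ d, (F a c * star (F b d)) * (w i c * star (w i d)) :=
          Finset.sum_comm
      _ = ∑ i, vecMulVec (g i) (star (g i)) a b :=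
          Finset.sum_congr rfl (fun i _ => (expand i).symm)
  · refine ⟨⟨vecMulVec_star_posSemidef (g i), ?_⟩, _root_.rank_vecMulVec_le _ _⟩
    rw [mul_vecMulVec_star, mul_vecMulVec_star]
    have hC : C *ᵥ g i = (C * F) *ᵥ (w i) := mulVec_mulVec _ _ _
    have hD : D *ᵥ g i = lam i • ((C * F) *ᵥ (w i)) := by
      have h4 : D *ᵥ g i = (D * F) *ᵥ (w i) := mulVec_mulVec _ _ _
      rw [h4]
      exact hrel i
    rw [hC, hD]
    ext a b
    simp only [vecMulVec_apply, Pi.smul_apply, Pi.star_apply, smul_eq_mul, star_mul']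
    calc ((C * F) *ᵥ (w i)) a * star (((C * F) *ᵥ (w i)) b)
        = (star (lam i) * lam i) * (((C * F) *ᵥ (w i)) a * star (((C * F) *ᵥ (w i)) b)) := by
          rw [hlam i, one_mul]
      _ = lam i * ((C * F) *ᵥ (w i)) a * (star (lam i) * star (((C * F) *ᵥ (w i)) b)) := by
          ring
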